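/- Let U, V ∈ C¹[0,1] with U ≥ 1 on [0,1], V > 0 on [0,1], V(0) ≤ 1, V(1) ≤ 1, and let 0 < j < 1. Suppose ∫₀¹ [((1/U) - j²/U³)U_x + j/(τU)]φ_x dx + ∫₀¹ (U - b)φ dx = 0 for all φ ∈ H¹₀(0,1), and ∫₀¹ [((1/V) - j²/V³)V_x + j/(τV)]φ_x dx + ∫₀¹ (V - b)φ dx ≤ 0 for all nonnegative φ ∈ H¹₀(0,1). Then U(x) ≥ V(x) for all x ∈ [0,1]. -/

import Mathlib

open Set MeasureTheory intervalIntegral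

noncomputable def cl (s : ℝ) : ℝ := max 0 (min s 1)
noncomputable def Sm (s : ℝ) : ℝ := (cl s)^2 * (3 - 2 * cl s)
noncomputable def Sm' (s : ℝ) : ℝ := 6 * cl s * (1 - cl s)

lemma cl_nonneg (s : ℝ) : 0 ≤ cl s := le_max_left _ _
lemma cl_le_one (s : ℝ) : cl s ≤ 1 := max_le zero_le_one (min_le_right _ _)
lemma cl_of_nonpos {s : ℝ} (h : s ≤ 0) : cl s = 0 := by
  simp [cl, min_eq_left (h.trans zero_le_one), max_eq_left h]
lemma cl_of_ge_one {s : ℝ} (h : 1 ≤ s) : cl s = 1 := by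
  simp [cl, min_eq_right h]
lemma cl_of_mem {s : ℝ} (h0 : 0 ≤ s) (h1 : s ≤ 1) : cl s = s := by
  simp [cl, min_eq_left h1, max_eq_right h0]
lemma cl_mono : Monotone cl := fun u v h => max_le_max le_rfl (min_le_min h le_rfl)
lemma cl_continuous : Continuous cl := continuous_const.max (continuous_id.min continuous_const)
lemma cl_le_abs (s : ℝ) : cl s ≤ |s| :=
  max_le (abs_nonneg s) ((min_le_left _ _).trans (le_abs_self s))

lemma Sm_of_nonpos {s : ℝ} (h : s ≤ 0) : Sm s = 0 := by simp [Sm, cl_of_nonpos h]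
lemma Sm_of_ge_one {s : ℝ} (h : 1 ≤ s) : Sm s = 1 := by norm_num [Sm, cl_of_ge_one h]
lemma Sm'_of_nonpos {s : ℝ} (h : s ≤ 0) : Sm' s = 0 := by simp [Sm', cl_of_nonpos h]
lemma Sm'_of_ge_one {s : ℝ} (h : 1 ≤ s) : Sm' s = 0 := by simp [Sm', cl_of_ge_one h]
lemma Sm'_nonneg (s : ℝ) : 0 ≤ Sm' s := by
  have h1 := cl_nonneg s; have h2 := cl_le_one s
  have : 0 ≤ cl s * (1 - cl s) := mul_nonneg h1 (by linarith)
  unfold Sm'; nlinarith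
lemma Sm'_continuous : Continuous Sm' := by
  unfold Sm'
  exact (continuous_const.mul cl_continuous).mul (continuous_const.sub cl_continuous)
lemma Sm_mono : Monotone Sm := by
  intro u v huv
  have h1 := cl_nonneg u; have h2 := cl_le_one v; have h3 := cl_mono huv
  unfold Sm
  nlinarith [mul_nonneg (sub_nonneg.mpr h3) (sub_nonneg.mpr h2),
    mul_nonneg (sub_nonneg.mpr h3) h1,
    mul_nonneg (mul_nonneg (sub_nonneg.mpr h3) (sub_nonneg.mpr h2)) h1,
    mul_nonneg (mul_nonneg (sub_nonneg.mpr h3) (sub_nonneg.mpr h2)) (cl_nonneg v),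
    sq_nonneg (cl v - cl u)]

lemma hasDerivAt_zero_of_sq_bound {f : ℝ → ℝ} {s : ℝ} (h : ∀ t, |f t - f s| ≤ 3*(t - s)^2) :
    HasDerivAt f 0 s := by
  rw [hasDerivAt_iff_isLittleO]
  simp only [smul_zero, sub_zero, mul_zero]
  rw [Asymptotics.isLittleO_iff]
  intro c hc
  filter_upwards [Metric.closedBall_mem_nhds s (show (0:ℝ) < c/3 by linarith)] with t ht
  rw [Metric.mem_closedBall, Real.dist_eq] at ht
  have hb := h t
  rw [Real.norm_eq_abs, Real.norm_eq_abs]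
  nlinarith [abs_nonneg (t - s), sq_abs (t - s), abs_nonneg (f t - f s)]

lemma Sm_bound0 (t : ℝ) : |Sm t - Sm 0| ≤ 3*(t - 0)^2 := by
  rw [Sm_of_nonpos (le_refl 0), sub_zero, sub_zero]
  have h1 := cl_nonneg t; have h2 := cl_le_one t
  have h3 : cl t ≤ |t| := cl_le_abs t
  have h4 : Sm t = (cl t)^2 * (3 - 2*cl t) := rfl
  rw [abs_of_nonneg (by nlinarith : (0:ℝ) ≤ Sm t), h4]
  nlinarith [sq_abs t, abs_nonneg t]

lemma Sm_bound1 (t : ℝ) : |Sm t - Sm 1| ≤ 3*(t - 1)^2 := by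
  rw [Sm_of_ge_one (le_refl 1)]
  rcases le_or_gt t 0 with h | h
  · rw [Sm_of_nonpos h]
    rw [abs_of_nonpos (by norm_num)]
    nlinarith
  rcases le_or_gt 1 t with h' | h'
  · rw [Sm_of_ge_one h']; simp; positivity
  · have hc : cl t = t := cl_of_mem h.le h'.le
    have h4 : Sm t = t^2 * (3 - 2*t) := by rw [Sm, hc]
    rw [h4]
    rw [abs_of_nonpos (by nlinarith [mul_nonneg (sq_nonneg (1-t)) h.le, sq_nonneg (1-t)])]
    nlinarith [mul_nonneg (sq_nonneg (1-t)) h.le, sq_nonneg (1-t), mul_nonneg (sq_nonneg (1-t)) (sub_nonneg.mpr h'.le)]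

lemma hasDerivAt_Sm (s : ℝ) : HasDerivAt Sm (Sm' s) s := by
  rcases lt_trichotomy s 0 with h | h | h
  · have he : Sm =ᶠ[nhds s] (fun _ => (0:ℝ)) := by
      filter_upwards [Iio_mem_nhds h] with t ht
      exact Sm_of_nonpos (le_of_lt ht)
    rw [Sm'_of_nonpos h.le]
    exact (hasDerivAt_const s (0:ℝ)).congr_of_eventuallyEq he
  · subst h
    have := hasDerivAt_zero_of_sq_bound Sm_bound0
    rwa [Sm'_of_nonpos le_rfl]
  rcases lt_trichotomy s 1 with h1 | h1 | h1
  · have he : Sm =ᶠ[nhds s] (fun t => t^2 * (3 - 2*t)) := by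
      filter_upwards [Ioo_mem_nhds h h1] with t ht
      rw [Sm, cl_of_mem ht.1.le ht.2.le]
    have hd : HasDerivAt (fun t : ℝ => t^2 * (3 - 2*t)) (6*s*(1-s)) s := by
      have := ((hasDerivAt_pow 2 s).mul ((hasDerivAt_const s (3:ℝ)).sub ((hasDerivAt_id s).const_mul 2)))
      exact this.congr_deriv (by simp only [Pi.sub_apply, id_eq]; norm_num; ring)
    have : Sm' s = 6*s*(1-s) := by rw [Sm', cl_of_mem h.le h1.le]
    rw [this]
    exact hd.congr_of_eventuallyEq he
  · subst h1
    have := hasDerivAt_zero_of_sq_bound Sm_bound1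
    rwa [Sm'_of_ge_one le_rfl]
  · have he : Sm =ᶠ[nhds s] (fun _ => (1:ℝ)) := by
      filter_upwards [Ioi_mem_nhds h1] with t ht
      exact Sm_of_ge_one (le_of_lt ht)
    rw [Sm'_of_ge_one h1.le]
    exact (hasDerivAt_const s (1:ℝ)).congr_of_eventuallyEq he

lemma Sm_continuous : Continuous Sm :=
  continuous_iff_continuousAt.mpr (fun t => (hasDerivAt_Sm t).continuousAt)

set_option maxHeartbeats 2000000 in
/-- Comparison principle for the approximate semiconductor equation with
current parameter `0 < j < 1`: if `U ∈ C¹[0,1]`, `U ≥ 1`, is a weak solution and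
`V ∈ C¹[0,1]`, `V > 0`, `V(0) ≤ 1`, `V(1) ≤ 1`, is a weak subsolution, then
`U ≥ V` on `[0,1]`. -/
theorem stmt_15 (τ j : ℝ) (hτ : 0 < τ) (hj0 : 0 < j) (hj1 : j < 1)
    (b U U' V V' : ℝ → ℝ)
    (hUdiff : ∀ x ∈ Set.Icc (0:ℝ) 1, HasDerivWithinAt U (U' x) (Set.Icc (0:ℝ) 1) x)
    (hU'c : ContinuousOn U' (Set.Icc (0:ℝ) 1))
    (hUge : ∀ x ∈ Set.Icc (0:ℝ) 1, 1 ≤ U x)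
    (hVdiff : ∀ x ∈ Set.Icc (0:ℝ) 1, HasDerivWithinAt V (V' x) (Set.Icc (0:ℝ) 1) x)
    (hV'c : ContinuousOn V' (Set.Icc (0:ℝ) 1))
    (hVpos : ∀ x ∈ Set.Icc (0:ℝ) 1, 0 < V x)
    (hV0 : V 0 ≤ 1) (hV1 : V 1 ≤ 1)
    (hUweak : ∀ φ φ' : ℝ → ℝ,
      (∀ x ∈ Set.Icc (0:ℝ) 1, HasDerivWithinAt φ (φ' x) (Set.Icc (0:ℝ) 1) x) →
      ContinuousOn φ' (Set.Icc (0:ℝ) 1) → φ 0 = 0 → φ 1 = 0 →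
      (∫ x in (0:ℝ)..1, ((1/U x - j^2/(U x)^3)*U' x + j/(τ*U x)) * φ' x)
        + (∫ x in (0:ℝ)..1, (U x - b x) * φ x) = 0)
    (hVweak : ∀ φ φ' : ℝ → ℝ,
      (∀ x ∈ Set.Icc (0:ℝ) 1, HasDerivWithinAt φ (φ' x) (Set.Icc (0:ℝ) 1) x) →
      ContinuousOn φ' (Set.Icc (0:ℝ) 1) → φ 0 = 0 → φ 1 = 0 →
      (∀ x ∈ Set.Icc (0:ℝ) 1, 0 ≤ φ x) →
      (∫ x in (0:ℝ)..1, ((1/V x - j^2/(V x)^3)*V' x + j/(τ*V x)) * φ' x)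
        + (∫ x in (0:ℝ)..1, (V x - b x) * φ x) ≤ 0) :
    ∀ x ∈ Set.Icc (0:ℝ) 1, V x ≤ U x := by
  by_contra hcon
  push_neg at hcon
  obtain ⟨x₀, hx₀mem, hx₀⟩ := hcon
  obtain ⟨hx₀0, hx₀1⟩ := hx₀mem
  have h01 : (0:ℝ) ≤ 1 := zero_le_one
  have h0mem : (0:ℝ) ∈ Icc (0:ℝ) 1 := by norm_num
  have h1mem : (1:ℝ) ∈ Icc (0:ℝ) 1 := by norm_num
  have hUc : ContinuousOn U (Icc 0 1) := fun t ht => (hUdiff t ht).continuousWithinAt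
  have hVc : ContinuousOn V (Icc 0 1) := fun t ht => (hVdiff t ht).continuousWithinAt
  have hVU0 : V 0 ≤ U 0 := hV0.trans (hUge 0 h0mem)
  have hVU1 : V 1 ≤ U 1 := hV1.trans (hUge 1 h1mem)
  have hx0lt : 0 < x₀ := by
    rcases hx₀0.lt_or_eq with h | h
    · exact h
    · exfalso; rw [← h] at hx₀; linarith
  have hx1lt : x₀ < 1 := by
    rcases hx₀1.lt_or_eq with h | h
    · exact h
    · exfalso; rw [h] at hx₀; linarith
  -- the set to the left
  set T1 : Set ℝ := {t | t ∈ Icc (0:ℝ) x₀ ∧ V t ≤ U t} with hT1def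
  have hT1ne : T1.Nonempty := ⟨0, ⟨le_rfl, hx₀0⟩, hVU0⟩
  have hT1bdd : BddAbove T1 := ⟨x₀, fun t ht => ht.1.2⟩
  set a := sSup T1 with hadef
  have haT1 : ∀ t ∈ T1, t ≤ a := fun t ht => le_csSup hT1bdd ht
  have ha0 : 0 ≤ a := haT1 0 ⟨⟨le_rfl, hx₀0⟩, hVU0⟩
  have hax : a ≤ x₀ := csSup_le hT1ne (fun t ht => ht.1.2)
  have ha01 : a ∈ Icc (0:ℝ) 1 := ⟨ha0, hax.trans hx₀1⟩
  have haclT1 : a ∈ closure T1 := (isLUB_csSup hT1ne hT1bdd).mem_closure hT1ne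
  have hT1sub : T1 ⊆ Icc (0:ℝ) 1 := fun t ht => ⟨ht.1.1, ht.1.2.trans hx₀1⟩
  have hVUa : V a ≤ U a := by
    have htd : Filter.Tendsto (fun t => V t - U t) (nhdsWithin a T1) (nhds (V a - U a)) :=
      ((hVc.sub hUc) a ha01).mono hT1sub
    have hne : (nhdsWithin a T1).NeBot := mem_closure_iff_nhdsWithin_neBot.mp haclT1
    have := le_of_tendsto htd (Filter.eventually_of_mem self_mem_nhdsWithin
      (fun t ht => sub_nonpos.mpr ht.2))
    linarith
  have hT1gt : ∀ t, a < t → t ≤ x₀ → U t < V t := by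
    intro t hat htx
    by_contra hle
    push_neg at hle
    exact absurd (haT1 t ⟨⟨ha0.trans hat.le, htx⟩, hle⟩) (not_le.mpr hat)
  have halt : a < x₀ := by
    rcases hax.lt_or_eq with h | h
    · exact h
    · exfalso; rw [h] at hVUa; linarith
  have hUVa : U a ≤ V a := by
    have hsub2 : Ioo a x₀ ⊆ Icc (0:ℝ) 1 := fun t ht => ⟨ha0.trans ht.1.le, ht.2.le.trans hx₀1⟩
    have htd : Filter.Tendsto (fun t => V t - U t) (nhdsWithin a (Ioo a x₀)) (nhds (V a - U a)) :=
      ((hVc.sub hUc) a ha01).mono hsub2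
    have hne : (nhdsWithin a (Ioo a x₀)).NeBot := mem_closure_iff_nhdsWithin_neBot.mp
      (by rw [closure_Ioo halt.ne]; exact ⟨le_rfl, halt.le⟩)
    have := ge_of_tendsto htd (Filter.eventually_of_mem self_mem_nhdsWithin
      (fun t ht => sub_nonneg.mpr (hT1gt t ht.1 ht.2.le).le))
    linarith
  have haeq : V a = U a := le_antisymm hVUa hUVa
  -- the set to the right
  set T2 : Set ℝ := {t | t ∈ Icc x₀ (1:ℝ) ∧ V t ≤ U t} with hT2def
  have hT2ne : T2.Nonempty := ⟨1, ⟨hx₀1, le_rfl⟩, hVU1⟩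
  have hT2bdd : BddBelow T2 := ⟨x₀, fun t ht => ht.1.1⟩
  set c := sInf T2 with hcdef
  have hcT2 : ∀ t ∈ T2, c ≤ t := fun t ht => csInf_le hT2bdd ht
  have hc1 : c ≤ 1 := hcT2 1 ⟨⟨hx₀1, le_rfl⟩, hVU1⟩
  have hxc : x₀ ≤ c := le_csInf hT2ne (fun t ht => ht.1.1)
  have hc01 : c ∈ Icc (0:ℝ) 1 := ⟨hx₀0.trans hxc, hc1⟩
  have hcclT2 : c ∈ closure T2 := (isGLB_csInf hT2ne hT2bdd).mem_closure hT2ne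
  have hT2sub : T2 ⊆ Icc (0:ℝ) 1 := fun t ht => ⟨hx₀0.trans ht.1.1, ht.1.2⟩
  have hVUc : V c ≤ U c := by
    have htd : Filter.Tendsto (fun t => V t - U t) (nhdsWithin c T2) (nhds (V c - U c)) :=
      ((hVc.sub hUc) c hc01).mono hT2sub
    have hne : (nhdsWithin c T2).NeBot := mem_closure_iff_nhdsWithin_neBot.mp hcclT2
    have := le_of_tendsto htd (Filter.eventually_of_mem self_mem_nhdsWithin
      (fun t ht => sub_nonpos.mpr ht.2))
    linarith
  have hT2gt : ∀ t, x₀ ≤ t → t < c → U t < V t := by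
    intro t htx htc
    by_contra hle
    push_neg at hle
    exact absurd (hcT2 t ⟨⟨htx, htc.le.trans hc1⟩, hle⟩) (not_le.mpr htc)
  have hcgt : x₀ < c := by
    rcases hxc.lt_or_eq with h | h
    · exact h
    · exfalso; rw [← h] at hVUc; linarith
  have hUVc : U c ≤ V c := by
    have hsub2 : Ioo x₀ c ⊆ Icc (0:ℝ) 1 := fun t ht => ⟨hx₀0.trans ht.1.le, ht.2.le.trans hc1⟩
    have htd : Filter.Tendsto (fun t => V t - U t) (nhdsWithin c (Ioo x₀ c)) (nhds (V c - U c)) :=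
      ((hVc.sub hUc) c hc01).mono hsub2
    have hne : (nhdsWithin c (Ioo x₀ c)).NeBot := mem_closure_iff_nhdsWithin_neBot.mp
      (by rw [closure_Ioo hcgt.ne]; exact ⟨hcgt.le, le_rfl⟩)
    have := ge_of_tendsto htd (Filter.eventually_of_mem self_mem_nhdsWithin
      (fun t ht => sub_nonneg.mpr (hT2gt t ht.1.le ht.2).le))
    linarith
  have hceq : V c = U c := le_antisymm hVUc hUVc
  have haltc : a < c := halt.trans hcgt
  have hVgeU : ∀ t ∈ Icc a c, U t ≤ V t := by
    intro t ht
    rcases le_or_gt t x₀ with h | h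
    · rcases ht.1.lt_or_eq with h' | h'
      · exact (hT1gt t h' h).le
      · rw [← h']; exact hUVa
    · rcases ht.2.lt_or_eq with h' | h'
      · exact (hT2gt t h.le h').le
      · rw [h']; exact hUVc
  have hIccsub : Icc a c ⊆ Icc (0:ℝ) 1 := Icc_subset_Icc ha0 hc1
  -- the difference of fluxes
  obtain ⟨p, hpdef⟩ : ∃ p : ℝ → ℝ, p = fun t => (((1/V t - j^2/(V t)^3)*V' t + j/(τ*V t))
      - ((1/U t - j^2/(U t)^3)*U' t + j/(τ*U t))) := ⟨_, rfl⟩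
  have hUpos : ∀ t ∈ Icc (0:ℝ) 1, 0 < U t := fun t ht => one_pos.trans_le (hUge t ht)
  have hAcont : ∀ (W W' : ℝ → ℝ), ContinuousOn W (Icc (0:ℝ) 1) → ContinuousOn W' (Icc (0:ℝ) 1) →
      (∀ t ∈ Icc (0:ℝ) 1, 0 < W t) →
      ContinuousOn (fun t => (1/W t - j^2/(W t)^3) * W' t) (Icc (0:ℝ) 1) := by
    intro W W' hWc hW'c hWpos
    apply ContinuousOn.mul _ hW'c
    apply ContinuousOn.sub
    · exact continuousOn_const.div hWc (fun t ht => (hWpos t ht).ne')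
    · exact continuousOn_const.div (hWc.pow 3) (fun t ht => pow_ne_zero 3 (hWpos t ht).ne')
  have hJcont : ∀ (W : ℝ → ℝ), ContinuousOn W (Icc (0:ℝ) 1) → (∀ t ∈ Icc (0:ℝ) 1, 0 < W t) →
      ContinuousOn (fun t => j/(τ * W t)) (Icc (0:ℝ) 1) := by
    intro W hWc hWpos
    exact continuousOn_const.div (continuousOn_const.mul hWc)
      (fun t ht => (mul_pos hτ (hWpos t ht)).ne')
  have hpc : ContinuousOn p (Icc (0:ℝ) 1) := by
    rw [hpdef]
    exact ((hAcont V V' hVc hV'c hVpos).add (hJcont V hVc hVpos)).sub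
      ((hAcont U U' hUc hU'c hUpos).add (hJcont U hUc hUpos))
  have hii : ∀ (f : ℝ → ℝ), ContinuousOn f (Icc (0:ℝ) 1) → ∀ α β : ℝ, 0 ≤ α → α ≤ β → β ≤ 1 →
      IntervalIntegrable f MeasureTheory.volume α β := by
    intro f hf α β hα hαβ hβ
    apply ContinuousOn.intervalIntegrable
    rw [uIcc_of_le hαβ]
    exact hf.mono (Icc_subset_Icc hα hβ)
  -- key monotonicity of p on [a,c]
  have hkey : ∀ x y, a ≤ x → x < y → y < c → p x ≤ p y := by
    intro x y hax' hxy hyc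
    have hx01 : x ∈ Icc (0:ℝ) 1 := ⟨ha0.trans hax', (hxy.le.trans hyc.le).trans hc1⟩
    have hy01 : y ∈ Icc (0:ℝ) 1 := ⟨(ha0.trans hax').trans hxy.le, hyc.le.trans hc1⟩
    by_contra hlt
    push_neg at hlt
    obtain ⟨ε, hεdef, hε⟩ : ∃ ε : ℝ, ε = (p x - p y)/2 ∧ 0 < ε :=
      ⟨(p x - p y)/2, rfl, by linarith only [hlt]⟩
    obtain ⟨δ₁, hδ₁, h1⟩ := Metric.continuousWithinAt_iff.mp (hpc x hx01) (ε/2) (by linarith)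
    obtain ⟨δ₂, hδ₂, h2⟩ := Metric.continuousWithinAt_iff.mp (hpc y hy01) (ε/2) (by linarith)
    set δ := min (min (δ₁/2) (δ₂/2)) (c - y) with hδdef
    have hδ : 0 < δ := lt_min (lt_min (by linarith) (by linarith)) (by linarith)
    have hδyc : y + δ ≤ c := by
      have := min_le_right (min (δ₁/2) (δ₂/2)) (c - y); linarith
    have hδ1 : δ ≤ δ₁/2 := le_trans (min_le_left _ _) (min_le_left _ _)
    have hδ2 : δ ≤ δ₂/2 := le_trans (min_le_left _ _) (min_le_right _ _)
    have hxδ1 : x + δ ≤ 1 := by linarith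
    have hyδ1 : y + δ ≤ 1 := hδyc.trans hc1
    have hinC : ∀ z : ℝ, Continuous (fun t : ℝ => (t - z)/δ) :=
      fun z => (continuous_id.sub continuous_const).div_const δ
    obtain ⟨φ, hφdef⟩ : ∃ φ : ℝ → ℝ, φ = fun t => Sm ((t - x)/δ) - Sm ((t - y)/δ) := ⟨_, rfl⟩
    obtain ⟨φ', hφ'def⟩ : ∃ φ' : ℝ → ℝ,
      φ' = fun t => Sm' ((t - x)/δ) * (1/δ) - Sm' ((t - y)/δ) * (1/δ) := ⟨_, rfl⟩
    have hφd : ∀ t : ℝ, HasDerivAt φ (φ' t) t := by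
      intro t
      have hx' := (hasDerivAt_Sm ((t - x)/δ)).comp t (((hasDerivAt_id t).sub_const x).div_const δ)
      have hy' := (hasDerivAt_Sm ((t - y)/δ)).comp t (((hasDerivAt_id t).sub_const y).div_const δ)
      simpa [hφdef, hφ'def, Function.comp_def, Pi.sub_def] using hx'.sub hy'
    have hφ'cont : Continuous φ' := by
      rw [hφ'def]
      exact ((Sm'_continuous.comp (hinC x)).mul continuous_const).sub
        ((Sm'_continuous.comp (hinC y)).mul continuous_const)
    have hφcont : Continuous φ := by
      rw [hφdef]
      exact (Sm_continuous.comp (hinC x)).sub (Sm_continuous.comp (hinC y))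
    have hφ0 : φ 0 = 0 := by
      have hx0' : (0 - x)/δ ≤ 0 := div_nonpos_of_nonpos_of_nonneg (by linarith [hx01.1]) hδ.le
      have hy0' : (0 - y)/δ ≤ 0 := div_nonpos_of_nonpos_of_nonneg (by linarith [hy01.1]) hδ.le
      simp only [hφdef]
      rw [Sm_of_nonpos hx0', Sm_of_nonpos hy0', sub_zero]
    have hφ1 : φ 1 = 0 := by
      have hy1' : (1:ℝ) ≤ (1 - y)/δ := (le_div_iff₀ hδ).mpr (by linarith)
      have hx1' : (1:ℝ) ≤ (1 - x)/δ := (le_div_iff₀ hδ).mpr (by linarith)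
      simp only [hφdef]
      rw [Sm_of_ge_one hx1', Sm_of_ge_one hy1', sub_self]
    have hφnn : ∀ t ∈ Icc (0:ℝ) 1, 0 ≤ φ t := by
      intro t _
      simp only [hφdef]
      apply sub_nonneg.mpr
      apply Sm_mono
      apply (div_le_div_iff_of_pos_right hδ).mpr
      linarith
    have hU := hUweak φ φ' (fun t _ => (hφd t).hasDerivWithinAt) hφ'cont.continuousOn hφ0 hφ1
    have hV := hVweak φ φ' (fun t _ => (hφd t).hasDerivWithinAt) hφ'cont.continuousOn hφ0 hφ1 hφnn
    have hfluxUc : ContinuousOn (fun t => (1/U t - j^2/(U t)^3)*U' t + j/(τ*U t)) (Icc (0:ℝ) 1) :=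
      (hAcont U U' hUc hU'c hUpos).add (hJcont U hUc hUpos)
    have hfluxVc : ContinuousOn (fun t => (1/V t - j^2/(V t)^3)*V' t + j/(τ*V t)) (Icc (0:ℝ) 1) :=
      (hAcont V V' hVc hV'c hVpos).add (hJcont V hVc hVpos)
    have hintU := hii (fun t => ((1/U t - j^2/(U t)^3)*U' t + j/(τ*U t)) * φ' t)
      (hfluxUc.mul hφ'cont.continuousOn) 0 1 le_rfl h01 le_rfl
    have hintV := hii (fun t => ((1/V t - j^2/(V t)^3)*V' t + j/(τ*V t)) * φ' t)
      (hfluxVc.mul hφ'cont.continuousOn) 0 1 le_rfl h01 le_rfl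
    have hVUφint := hii (fun t => (V t - U t) * φ t)
      ((hVc.sub hUc).mul hφcont.continuousOn) 0 1 le_rfl h01 le_rfl
    have hVUφnn : ∀ t ∈ Icc (0:ℝ) 1, 0 ≤ (V t - U t) * φ t := by
      intro t ht
      rcases le_or_gt t x with h | h
      · have h1' : (t - x)/δ ≤ 0 := div_nonpos_of_nonpos_of_nonneg (by linarith) hδ.le
        have h2' : (t - y)/δ ≤ 0 := div_nonpos_of_nonpos_of_nonneg (by linarith) hδ.le
        simp only [hφdef]
        rw [Sm_of_nonpos h1', Sm_of_nonpos h2']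
        simp
      rcases le_or_gt (y + δ) t with h' | h'
      · have h1' : (1:ℝ) ≤ (t - x)/δ := (le_div_iff₀ hδ).mpr (by linarith)
        have h2' : (1:ℝ) ≤ (t - y)/δ := (le_div_iff₀ hδ).mpr (by linarith)
        simp only [hφdef]
        rw [Sm_of_ge_one h1', Sm_of_ge_one h2']
        simp
      · have htac : t ∈ Icc a c := ⟨hax'.trans h.le, h'.le.trans hδyc⟩
        exact mul_nonneg (sub_nonneg.mpr (hVgeU t htac)) (hφnn t ht)
    have hB : (∫ t in (0:ℝ)..1, (U t - b t) * φ t) ≤ (∫ t in (0:ℝ)..1, (V t - b t) * φ t) := by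
      by_cases hb : IntervalIntegrable (fun t => (U t - b t) * φ t) MeasureTheory.volume 0 1
      · have heq : (fun t => (V t - b t) * φ t)
            = fun t => (V t - U t) * φ t + (U t - b t) * φ t := by
          funext t; ring
        rw [heq, intervalIntegral.integral_add hVUφint hb]
        have := intervalIntegral.integral_nonneg (μ := MeasureTheory.volume) h01 hVUφnn
        linarith
      · have hb2 : ¬ IntervalIntegrable (fun t => (V t - b t) * φ t) MeasureTheory.volume 0 1 := by
          intro hcontr
          apply hb
          have heq : (fun t => (U t - b t) * φ t)
              = fun t => (V t - b t) * φ t - (V t - U t) * φ t := by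
            funext t; ring
          rw [heq]
          exact hcontr.sub hVUφint
        rw [intervalIntegral.integral_undef hb, intervalIntegral.integral_undef hb2]
    have hpφ'le : (∫ t in (0:ℝ)..1, p t * φ' t) ≤ 0 := by
      have hsub : (∫ t in (0:ℝ)..1, p t * φ' t)
          = (∫ t in (0:ℝ)..1, ((1/V t - j^2/(V t)^3)*V' t + j/(τ*V t)) * φ' t)
            - (∫ t in (0:ℝ)..1, ((1/U t - j^2/(U t)^3)*U' t + j/(τ*U t)) * φ' t) := by
        rw [← intervalIntegral.integral_sub hintV hintU]
        apply intervalIntegral.integral_congr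
        intro t _
        simp only [hpdef]; ring
      rw [hsub]; linarith
    have hcontk : ∀ z : ℝ, ContinuousOn (fun t => p t * (Sm' ((t - z)/δ) * (1/δ))) (Icc (0:ℝ) 1) :=
      fun z => hpc.mul (Continuous.continuousOn
        ((Sm'_continuous.comp (hinC z)).mul continuous_const))
    have hsplit : (∫ t in (0:ℝ)..1, p t * φ' t)
        = (∫ t in (0:ℝ)..1, p t * (Sm' ((t - x)/δ) * (1/δ)))
          - (∫ t in (0:ℝ)..1, p t * (Sm' ((t - y)/δ) * (1/δ))) := by
      rw [← intervalIntegral.integral_sub (hii _ (hcontk x) 0 1 le_rfl h01 le_rfl)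
        (hii _ (hcontk y) 0 1 le_rfl h01 le_rfl)]
      apply intervalIntegral.integral_congr
      intro t _
      simp only [hφ'def]; ring
    have hreduce : ∀ z : ℝ, 0 ≤ z → z + δ ≤ 1 →
        (∫ t in (0:ℝ)..1, p t * (Sm' ((t - z)/δ) * (1/δ)))
          = ∫ t in z..(z+δ), p t * (Sm' ((t - z)/δ) * (1/δ)) := by
      intro z hz0 hz1
      have hzδ : z ≤ z + δ := by linarith
      have e1 := intervalIntegral.integral_add_adjacent_intervals
        (hii _ (hcontk z) 0 z le_rfl hz0 (by linarith))
        (hii _ (hcontk z) z (z+δ) hz0 hzδ hz1)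
      have e2 := intervalIntegral.integral_add_adjacent_intervals
        (hii _ (hcontk z) 0 (z+δ) le_rfl (by linarith) hz1)
        (hii _ (hcontk z) (z+δ) 1 (by linarith) hz1 le_rfl)
      have hz01 : (∫ t in (0:ℝ)..z, p t * (Sm' ((t - z)/δ) * (1/δ))) = 0 := by
        rw [intervalIntegral.integral_congr (g := fun _ => (0:ℝ)) ?_,
          intervalIntegral.integral_zero]
        intro t ht
        rw [uIcc_of_le hz0] at ht
        have : (t - z)/δ ≤ 0 := div_nonpos_of_nonpos_of_nonneg (by linarith [ht.2]) hδ.le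
        simp [Sm'_of_nonpos this]
      have hz11 : (∫ t in (z+δ)..(1:ℝ), p t * (Sm' ((t - z)/δ) * (1/δ))) = 0 := by
        rw [intervalIntegral.integral_congr (g := fun _ => (0:ℝ)) ?_,
          intervalIntegral.integral_zero]
        intro t ht
        rw [uIcc_of_le hz1] at ht
        have : (1:ℝ) ≤ (t - z)/δ := (le_div_iff₀ hδ).mpr (by linarith [ht.1])
        simp [Sm'_of_ge_one this]
      linarith
    have hbump : ∀ z : ℝ, (∫ t in z..(z+δ), Sm' ((t - z)/δ) * (1/δ)) = 1 := by
      intro z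
      have hd : ∀ t ∈ uIcc z (z+δ), HasDerivAt (fun u => Sm ((u - z)/δ))
          (Sm' ((t - z)/δ) * (1/δ)) t := by
        intro t _
        have h := (hasDerivAt_Sm ((t - z)/δ)).comp t (((hasDerivAt_id t).sub_const z).div_const δ)
        simpa [Function.comp_def] using h
      rw [intervalIntegral.integral_eq_sub_of_hasDerivAt hd
        (((Sm'_continuous.comp (hinC z)).mul continuous_const).intervalIntegrable _ _)]
      rw [show (z + δ - z)/δ = 1 by rw [add_sub_cancel_left, div_self hδ.ne'], show (z - z)/δ = 0 by simp]
      rw [Sm_of_ge_one le_rfl, Sm_of_nonpos le_rfl]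
      norm_num
    have hI1 : p x - ε/2 ≤ ∫ t in x..(x+δ), p t * (Sm' ((t - x)/δ) * (1/δ)) := by
      have hmono := intervalIntegral.integral_mono_on (by linarith : x ≤ x + δ)
        (hii (fun t => (p x - ε/2) * (Sm' ((t - x)/δ) * (1/δ)))
          (continuousOn_const.mul (Continuous.continuousOn
            ((Sm'_continuous.comp (hinC x)).mul continuous_const)))
          x (x+δ) hx01.1 (by linarith) hxδ1)
        (hii _ (hcontk x) x (x+δ) hx01.1 (by linarith) hxδ1)
        ?_
      · calc p x - ε/2 = (p x - ε/2) * 1 := by ring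
          _ = ∫ t in x..(x+δ), (p x - ε/2) * (Sm' ((t - x)/δ) * (1/δ)) := by
              rw [intervalIntegral.integral_const_mul, hbump x]
          _ ≤ _ := hmono
      · intro t ht
        have ht01 : t ∈ Icc (0:ℝ) 1 := ⟨hx01.1.trans ht.1, ht.2.trans hxδ1⟩
        have hdist : dist t x < δ₁ := by
          rw [Real.dist_eq, abs_of_nonneg (by linarith [ht.1])]
          linarith [ht.2]
        have hcl := h1 ht01 hdist
        rw [Real.dist_eq] at hcl
        have habs := abs_lt.mp hcl
        have hk : (0:ℝ) ≤ Sm' ((t - x)/δ) * (1/δ) :=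
          mul_nonneg (Sm'_nonneg _) (by positivity)
        exact mul_le_mul_of_nonneg_right (by linarith [habs.1]) hk
    have hI2 : (∫ t in y..(y+δ), p t * (Sm' ((t - y)/δ) * (1/δ))) ≤ p y + ε/2 := by
      have hmono := intervalIntegral.integral_mono_on (by linarith : y ≤ y + δ)
        (hii _ (hcontk y) y (y+δ) hy01.1 (by linarith) hyδ1)
        (hii (fun t => (p y + ε/2) * (Sm' ((t - y)/δ) * (1/δ)))
          (continuousOn_const.mul (Continuous.continuousOn
            ((Sm'_continuous.comp (hinC y)).mul continuous_const)))
          y (y+δ) hy01.1 (by linarith) hyδ1)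
        ?_
      · calc (∫ t in y..(y+δ), p t * (Sm' ((t - y)/δ) * (1/δ)))
            ≤ ∫ t in y..(y+δ), (p y + ε/2) * (Sm' ((t - y)/δ) * (1/δ)) := hmono
          _ = (p y + ε/2) * 1 := by rw [intervalIntegral.integral_const_mul, hbump y]
          _ = p y + ε/2 := by ring
      · intro t ht
        have ht01 : t ∈ Icc (0:ℝ) 1 := ⟨hy01.1.trans ht.1, ht.2.trans hyδ1⟩
        have hdist : dist t y < δ₂ := by
          rw [Real.dist_eq, abs_of_nonneg (by linarith [ht.1])]
          linarith [ht.2]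
        have hcl := h2 ht01 hdist
        rw [Real.dist_eq] at hcl
        have habs := abs_lt.mp hcl
        have hk : (0:ℝ) ≤ Sm' ((t - y)/δ) * (1/δ) :=
          mul_nonneg (Sm'_nonneg _) (by positivity)
        exact mul_le_mul_of_nonneg_right (by linarith [habs.2]) hk
    have h1' := hreduce x hx01.1 hxδ1
    have h2' := hreduce y hy01.1 hyδ1
    have e3 : (∫ t in (0:ℝ)..1, p t * (Sm' ((t - x)/δ) * (1/δ)))
        ≤ ∫ t in (0:ℝ)..1, p t * (Sm' ((t - y)/δ) * (1/δ)) := by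
      rw [hsplit, sub_nonpos] at hpφ'le
      exact hpφ'le
    have e4 : p x - ε/2 ≤ p y + ε/2 := by
      calc p x - ε/2 ≤ ∫ t in x..(x+δ), p t * (Sm' ((t - x)/δ) * (1/δ)) := hI1
        _ = ∫ t in (0:ℝ)..1, p t * (Sm' ((t - x)/δ) * (1/δ)) := h1'.symm
        _ ≤ ∫ t in (0:ℝ)..1, p t * (Sm' ((t - y)/δ) * (1/δ)) := e3
        _ = ∫ t in y..(y+δ), p t * (Sm' ((t - y)/δ) * (1/δ)) := h2'
        _ ≤ p y + ε/2 := hI2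
    linarith only [e4, hεdef, hlt]
  -- p is nonnegative at a
  have hpa : 0 ≤ p a := by
    have hd : HasDerivWithinAt (fun t => V t - U t) (V' a - U' a) (Icc a c) a :=
      ((hVdiff a ha01).sub (hUdiff a ha01)).mono hIccsub
    have hslope := hasDerivWithinAt_iff_tendsto_slope.mp hd
    have hseteq : Icc a c \ {a} = Ioc a c := Icc_diff_left
    rw [hseteq] at hslope
    have hne : (nhdsWithin a (Ioc a c)).NeBot := mem_closure_iff_nhdsWithin_neBot.mp
      (by rw [closure_Ioc haltc.ne]; exact ⟨le_rfl, haltc.le⟩)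
    have hdnn : 0 ≤ V' a - U' a := by
      refine ge_of_tendsto hslope (Filter.eventually_of_mem self_mem_nhdsWithin ?_)
      intro t ht
      have h1 : 0 < t - a := sub_pos.mpr ht.1
      have h2 : 0 ≤ V t - U t := sub_nonneg.mpr (hVgeU t ⟨ht.1.le, ht.2⟩)
      rw [slope_def_field]
      rw [show V a - U a = 0 by rw [haeq]; ring]
      rw [sub_zero]
      positivity
    have hu : 1 ≤ U a := hUge a ha01
    have hF : 0 ≤ 1/U a - j^2/(U a)^3 := by
      rw [sub_nonneg, div_le_div_iff₀ (by positivity) (by positivity)]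
      have hj2 : j^2 ≤ 1 := by nlinarith only [hj0, hj1]
      have hu0 : (0:ℝ) ≤ U a := by linarith only [hu]
      have h5 : j^2 * U a ≤ 1 * U a := mul_le_mul_of_nonneg_right hj2 hu0
      have h6 : U a ≤ (U a)^3 := by
        have hx6 := mul_nonneg (mul_nonneg (le_trans zero_le_one hu) (sub_nonneg.mpr hu))
          (by linarith only [hu] : (0:ℝ) ≤ U a + 1)
        nlinarith only [hx6]
      linarith only [h5, h6]
    have hpeq : p a = (1/U a - j^2/(U a)^3) * (V' a - U' a) := by
      simp only [hpdef]
      rw [haeq]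
      ring
    rw [hpeq]
    exact mul_nonneg hF hdnn
  -- p is nonnegative on [a,c]
  have hpnn : ∀ t ∈ Icc a c, 0 ≤ p t := by
    intro t ht
    rcases ht.1.lt_or_eq with ht1 | ht1
    swap
    · rw [← ht1]; exact hpa
    rcases ht.2.lt_or_eq with ht2 | ht2
    · exact hpa.trans (hkey a t le_rfl ht1 ht2)
    · rw [ht2]
      have htd : Filter.Tendsto p (nhdsWithin c (Ioo a c)) (nhds (p c)) :=
        (hpc c hc01).mono (fun s hs => hIccsub ⟨hs.1.le, hs.2.le⟩)
      have hne : (nhdsWithin c (Ioo a c)).NeBot := mem_closure_iff_nhdsWithin_neBot.mp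
        (by rw [closure_Ioo haltc.ne]; exact ⟨haltc.le, le_rfl⟩)
      refine ge_of_tendsto htd (Filter.eventually_of_mem self_mem_nhdsWithin ?_)
      intro s hs
      exact hpa.trans (hkey a s le_rfl hs.1 hs.2)
  -- the transformed function w
  have hG : ∀ z : ℝ, 0 < z →
      HasDerivAt (fun u : ℝ => Real.log u + j^2/(2*u^2)) (1/z - j^2/z^3) z := by
    intro z hz
    have h1 : HasDerivAt Real.log z⁻¹ z := Real.hasDerivAt_log hz.ne'
    have h2 : HasDerivAt (fun u : ℝ => 2*u^2) (2*(2*z)) z := by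
      simpa using ((hasDerivAt_pow 2 z).const_mul 2)
    have h3 : HasDerivAt (fun u : ℝ => j^2/(2*u^2))
        ((0*(2*z^2) - j^2*(2*(2*z)))/(2*z^2)^2) z :=
      (hasDerivAt_const z (j^2)).div h2 (by positivity)
    have h4 := h1.add h3
    exact h4.congr_deriv (by field_simp; ring)
  obtain ⟨w, hwdef⟩ : ∃ w : ℝ → ℝ, w = fun t => (Real.log (V t) + j^2/(2*(V t)^2))
      - (Real.log (U t) + j^2/(2*(U t)^2)) := ⟨_, rfl⟩
  obtain ⟨w', hw'def⟩ : ∃ w' : ℝ → ℝ,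
    w' = fun t => (1/V t - j^2/(V t)^3)*V' t - (1/U t - j^2/(U t)^3)*U' t := ⟨_, rfl⟩
  have hwd : ∀ t ∈ Icc (0:ℝ) 1, HasDerivWithinAt w (w' t) (Icc (0:ℝ) 1) t := by
    intro t ht
    have h1 := (hG (V t) (hVpos t ht)).comp_hasDerivWithinAt t (hVdiff t ht)
    have h2 := (hG (U t) (hUpos t ht)).comp_hasDerivWithinAt t (hUdiff t ht)
    simpa [hwdef, hw'def, Function.comp_def, Pi.sub_def] using h1.sub h2
  have hw'c : ContinuousOn w' (Icc (0:ℝ) 1) := by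
    rw [hw'def]
    exact (hAcont V V' hVc hV'c hVpos).sub (hAcont U U' hUc hU'c hUpos)
  have hw'nn : ∀ t ∈ Icc x₀ c, 0 ≤ w' t := by
    intro t ht
    have ht' : t ∈ Icc a c := ⟨hax.trans ht.1, ht.2⟩
    have hp0 := hpnn t ht'
    have hUV := hVgeU t ht'
    have ht01 : t ∈ Icc (0:ℝ) 1 := hIccsub ht'
    have hJ : j/(τ*V t) ≤ j/(τ*U t) := by
      apply div_le_div_of_nonneg_left hj0.le (mul_pos hτ (hUpos t ht01))
      exact mul_le_mul_of_nonneg_left hUV hτ.le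
    simp only [hpdef] at hp0
    simp only [hw'def]
    linarith
  have hwcont : ContinuousOn w (Icc (0:ℝ) 1) := fun t ht => (hwd t ht).continuousWithinAt
  have hftc : (∫ t in x₀..c, w' t) = w c - w x₀ := by
    apply intervalIntegral.integral_eq_sub_of_hasDeriv_right_of_le hcgt.le
    · exact hwcont.mono (Icc_subset_Icc hx₀0 hc1)
    · intro t ht
      have h01' : t ∈ Ioo (0:ℝ) 1 := ⟨hx0lt.trans ht.1, lt_of_lt_of_le ht.2 hc1⟩
      exact ((hwd t (Ioo_subset_Icc_self h01')).hasDerivAt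
        (Icc_mem_nhds h01'.1 h01'.2)).hasDerivWithinAt
    · exact hii w' hw'c x₀ c hx₀0 hcgt.le hc1
  have hintnn : 0 ≤ ∫ t in x₀..c, w' t :=
    intervalIntegral.integral_nonneg hcgt.le (fun u hu => hw'nn u hu)
  have hwc : w c = 0 := by
    simp only [hwdef]
    rw [hceq]
    ring
  have hwx₀pos : 0 < w x₀ := by
    have hu1 : 1 ≤ U x₀ := hUge x₀ ⟨hx₀0, hx₀1⟩
    have hGsub : (∫ z in (U x₀)..(V x₀), (1/z - j^2/z^3))
        = (Real.log (V x₀) + j^2/(2*(V x₀)^2)) - (Real.log (U x₀) + j^2/(2*(U x₀)^2)) := by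
      refine intervalIntegral.integral_eq_sub_of_hasDerivAt
        (f := fun u : ℝ => Real.log u + j^2/(2*u^2)) ?_ ?_
      · intro z hz
        rw [uIcc_of_le hx₀.le] at hz
        exact hG z (lt_of_lt_of_le one_pos (hu1.trans hz.1))
      · apply ContinuousOn.intervalIntegrable
        rw [uIcc_of_le hx₀.le]
        apply ContinuousOn.sub
        · exact continuousOn_const.div continuousOn_id
            (fun z hz => (lt_of_lt_of_le one_pos (hu1.trans hz.1)).ne')
        · exact continuousOn_const.div (continuousOn_id.pow 3)
            (fun z hz => pow_ne_zero 3 (lt_of_lt_of_le one_pos (hu1.trans hz.1)).ne')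
    have hpos : 0 < ∫ z in (U x₀)..(V x₀), (1/z - j^2/z^3) := by
      apply intervalIntegral.intervalIntegral_pos_of_pos_on
      · apply ContinuousOn.intervalIntegrable
        rw [uIcc_of_le hx₀.le]
        apply ContinuousOn.sub
        · exact continuousOn_const.div continuousOn_id
            (fun z hz => (lt_of_lt_of_le one_pos (hu1.trans hz.1)).ne')
        · exact continuousOn_const.div (continuousOn_id.pow 3)
            (fun z hz => pow_ne_zero 3 (lt_of_lt_of_le one_pos (hu1.trans hz.1)).ne')
      · intro z hz
        have hz1 : 1 < z := lt_of_le_of_lt hu1 hz.1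
        rw [sub_pos, div_lt_div_iff₀ (by positivity) (by positivity)]
        have hz0 : (0:ℝ) < z := by linarith only [hz1]
        have hj2 : j^2 ≤ 1 := by nlinarith only [hj0, hj1]
        have h5 : j^2 * z ≤ 1 * z := mul_le_mul_of_nonneg_right hj2 hz0.le
        have h6 : z < z^3 := by nlinarith only [hz1, mul_pos (mul_pos hz0 (sub_pos.mpr hz1)) (show (0:ℝ) < z + 1 by linarith only [hz0])]
        linarith only [h5, h6]
      · exact hx₀
    simp only [hwdef]
    rw [← hGsub]
    exact hpos
  linarith
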